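/- For every integer p ≥ 1 and every z ∈ [0,1], the B-spline basis supplemented for the Neumann boundary condition forms a partition of unity: ∑_{n=0}^{l−p−1} b_n^p(z) + b_L^p(z) + b_R^p(z) = 1. -/

import Mathlib

/-- Uniform knots `z_j = j · Δz`. -/
noncomputable def knot (Δz : ℝ) (j : ℤ) : ℝ := j * Δz

/-- B-spline basis functions `b_n^p` on uniform knots, defined by the
Cox–de Boor recursion. -/
noncomputable def bspline (Δz : ℝ) : ℕ → ℤ → ℝ → ℝ
  | 0, n, z => if knot Δz n ≤ z ∧ z < knot Δz (n + 1) then 1 else 0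
  | p + 1, n, z =>
      ((z - knot Δz n) / (knot Δz (n + (p : ℤ) + 1) - knot Δz n)) * bspline Δz p n z +
      ((knot Δz (n + (p : ℤ) + 2) - z) / (knot Δz (n + (p : ℤ) + 2) - knot Δz (n + 1))) *
        bspline Δz p (n + 1) z
/-- Left boundary B-spline function `b_L^p` for the Neumann boundary condition
on `[0,1]` with `Δz = 1/l`. -/
noncomputable def bsplineL (l p : ℕ) (z : ℝ) : ℝ :=
  if 0 ≤ z ∧ z < (p : ℝ) * (1 / (l : ℝ)) then
    ∑ n ∈ Finset.Icc (-(p : ℤ)) (-1 : ℤ), bspline (1 / (l : ℝ)) p n z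
  else 0

/-- Right boundary B-spline function `b_R^p` for the Neumann boundary condition
on `[0,1]` with `Δz = 1/l`. -/
noncomputable def bsplineR (l p : ℕ) (z : ℝ) : ℝ :=
  if 1 - (p : ℝ) * (1 / (l : ℝ)) ≤ z ∧ z ≤ 1 then
    ∑ n ∈ Finset.Icc ((l : ℤ) - (p : ℤ)) ((l : ℤ) - 1), bspline (1 / (l : ℝ)) p n z
  else 0

lemma knot_mono {Δz : ℝ} (hΔ : 0 < Δz) {a b : ℤ} (h : a ≤ b) :
    knot Δz a ≤ knot Δz b := by
  unfold knot
  have : (a : ℝ) ≤ (b : ℝ) := by exact_mod_cast h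
  nlinarith

lemma bspline_zero_of_lt {Δz : ℝ} (hΔ : 0 < Δz) :
    ∀ (p : ℕ) (n : ℤ) (z : ℝ), z < knot Δz n → bspline Δz p n z = 0 := by
  intro p
  induction p with
  | zero =>
    intro n z h
    simp only [bspline]
    rw [if_neg]
    rintro ⟨h1, _⟩; linarith
  | succ p ih =>
    intro n z h
    have h2 : z < knot Δz (n + 1) := lt_of_lt_of_le h (knot_mono hΔ (by omega))
    simp only [bspline, ih n z h, ih (n + 1) z h2, mul_zero, add_zero]

lemma bspline_zero_of_ge {Δz : ℝ} (hΔ : 0 < Δz) :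
    ∀ (p : ℕ) (n : ℤ), ∀ z : ℝ, knot Δz (n + (p : ℤ) + 1) ≤ z → bspline Δz p n z = 0 := by
  intro p
  induction p with
  | zero =>
    intro n z h
    have h' : knot Δz (n + 1) ≤ z := by
      rw [show n + (1 : ℤ) = n + ((0 : ℕ) : ℤ) + 1 from by push_cast; ring]
      exact h
    simp only [bspline]
    rw [if_neg]
    rintro ⟨_, h2⟩; linarith
  | succ p ih =>
    intro n z h
    have h' : knot Δz (n + (p : ℤ) + 2) ≤ z := by
      rw [show n + (p : ℤ) + 2 = n + (((p + 1 : ℕ)) : ℤ) + 1 from by push_cast; ring]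
      exact h
    have h1 : knot Δz (n + (p : ℤ) + 1) ≤ z := le_trans (knot_mono hΔ (by omega)) h'
    have h2 : knot Δz ((n + 1) + (p : ℤ) + 1) ≤ z := by
      rw [show (n + 1) + (p : ℤ) + 1 = n + (p : ℤ) + 2 from by ring]
      exact h'
    simp only [bspline, ih n z h1, ih (n + 1) z h2, mul_zero, add_zero, zero_add]

lemma bspline_at_knot {Δz : ℝ} (hΔ : 0 < Δz) (p : ℕ) (n : ℤ) :
    bspline Δz (p + 1) n (knot Δz n) = 0 := by
  have h1 : knot Δz n < knot Δz (n + 1) := by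
    unfold knot; push_cast; nlinarith
  simp only [bspline, bspline_zero_of_lt hΔ p (n + 1) _ h1, mul_zero, add_zero,
    sub_self, zero_div, zero_mul]

lemma sum_Icc_shift (f : ℤ → ℝ) (a b : ℤ) :
    ∑ n ∈ Finset.Icc a b, f (n + 1) = ∑ n ∈ Finset.Icc (a + 1) (b + 1), f n := by
  rw [← Finset.map_add_right_Icc, Finset.sum_map]
  rfl

lemma knot_sub (Δz : ℝ) (a b : ℤ) : knot Δz a - knot Δz b = ((a - b : ℤ) : ℝ) * Δz := by
  unfold knot; push_cast; ring

/-- Local partition of unity. -/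
lemma bspline_partition {Δz : ℝ} (hΔ : 0 < Δz) (z : ℝ) :
    ∀ (p : ℕ) (m a b : ℤ), knot Δz m ≤ z → z < knot Δz (m + 1) →
      a ≤ m - p → m ≤ b →
      ∑ n ∈ Finset.Icc a b, bspline Δz p n z = 1 := by
  intro p
  induction p with
  | zero =>
    intro m a b hm1 hm2 ha hb
    rw [Finset.sum_eq_single_of_mem m (by simp only [Finset.mem_Icc]; omega)]
    · simp only [bspline]
      rw [if_pos ⟨hm1, hm2⟩]
    · intro n _ hn
      simp only [bspline]
      rw [if_neg]
      rintro ⟨h1, h2⟩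
      rcases lt_or_gt_of_ne hn with h | h
      · have : knot Δz (n + 1) ≤ knot Δz m := knot_mono hΔ (by omega)
        linarith
      · have : knot Δz (m + 1) ≤ knot Δz n := knot_mono hΔ (by omega)
        linarith
  | succ p ih =>
    intro m a b hm1 hm2 ha hb
    have hsupp : ∀ n : ℤ, n < m - p ∨ m < n → bspline Δz p n z = 0 := by
      intro n hn
      rcases hn with h | h
      · exact bspline_zero_of_ge hΔ p n z
          (le_trans (knot_mono hΔ (by omega)) hm1)
      · exact bspline_zero_of_lt hΔ p n z
          (lt_of_lt_of_le hm2 (knot_mono hΔ (by omega)))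
    have hd : ((p : ℝ) + 1) * Δz ≠ 0 := by positivity
    have e1 : ∀ n : ℤ, knot Δz (n + p + 1) - knot Δz n = ((p : ℝ) + 1) * Δz := by
      intro n; rw [knot_sub]; push_cast; ring_nf
    simp only [bspline]
    rw [Finset.sum_add_distrib]
    -- restrict first sum to Icc (m-p) m
    have r1 : ∑ n ∈ Finset.Icc a b,
        (z - knot Δz n) / (knot Δz (n + p + 1) - knot Δz n) * bspline Δz p n z
        = ∑ n ∈ Finset.Icc (m - p) m,
        (z - knot Δz n) / (knot Δz (n + p + 1) - knot Δz n) * bspline Δz p n z := by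
      symm
      apply Finset.sum_subset
      · intro x hx; simp only [Finset.mem_Icc] at *; omega
      · intro x hx hx'
        simp only [Finset.mem_Icc] at hx hx'
        rw [hsupp x (by omega), mul_zero]
    -- reindex and restrict second sum
    have e : (∑ n ∈ Finset.Icc a b,
        (knot Δz (n + (p : ℤ) + 2) - z) / (knot Δz (n + (p : ℤ) + 2) - knot Δz (n + 1)) *
          bspline Δz p (n + 1) z)
        = ∑ n ∈ Finset.Icc a b,
        (knot Δz ((n + 1) + (p : ℤ) + 1) - z) /
            (knot Δz ((n + 1) + (p : ℤ) + 1) - knot Δz (n + 1)) *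
          bspline Δz p (n + 1) z :=
      Finset.sum_congr rfl (fun n _ => by
        rw [show n + (p : ℤ) + 2 = (n + 1) + (p : ℤ) + 1 from by ring])
    have key := sum_Icc_shift
      (fun k => (knot Δz (k + (p : ℤ) + 1) - z) / (knot Δz (k + (p : ℤ) + 1) - knot Δz k) *
        bspline Δz p k z) a b
    have r2 : (∑ n ∈ Finset.Icc a b,
        (knot Δz (n + (p : ℤ) + 2) - z) / (knot Δz (n + (p : ℤ) + 2) - knot Δz (n + 1)) *
          bspline Δz p (n + 1) z)
        = ∑ n ∈ Finset.Icc (m - p) m,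
        (knot Δz (n + (p : ℤ) + 1) - z) / (knot Δz (n + (p : ℤ) + 1) - knot Δz n) *
          bspline Δz p n z := by
      refine (e.trans key).trans ?_
      symm
      apply Finset.sum_subset
      · intro x hx; simp only [Finset.mem_Icc] at *; omega
      · intro x hx hx'
        simp only [Finset.mem_Icc] at hx hx'
        rw [hsupp x (by omega), mul_zero]
    rw [r1, r2, ← Finset.sum_add_distrib]
    have hc : ∀ n ∈ Finset.Icc (m - (p : ℤ)) m,
        (z - knot Δz n) / (knot Δz (n + p + 1) - knot Δz n) * bspline Δz p n z +
        (knot Δz (n + p + 1) - z) / (knot Δz (n + p + 1) - knot Δz n) * bspline Δz p n z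
        = bspline Δz p n z := by
      intro n _
      rw [e1, ← add_mul, ← add_div]
      rw [show z - knot Δz n + (knot Δz (n + p + 1) - z)
          = knot Δz (n + p + 1) - knot Δz n from by ring, e1, div_self hd, one_mul]
    rw [Finset.sum_congr rfl hc]
    exact ih m (m - p) m hm1 hm2 (by omega) le_rfl

/-- Partition of unity for the B-spline basis on `[0,1]` supplemented for the
Neumann boundary condition. -/
theorem bspline_neumann_partition_of_unity (l p : ℕ) (hp : 1 ≤ p) (hl : p < l)
    (z : ℝ) (hz0 : 0 ≤ z) (hz1 : z ≤ 1) :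
    (∑ n ∈ Finset.Icc (0 : ℤ) ((l : ℤ) - (p : ℤ) - 1), bspline (1 / (l : ℝ)) p n z) +
      bsplineL l p z + bsplineR l p z = 1 := by
  have hp' : (1 : ℤ) ≤ (p : ℤ) := by exact_mod_cast hp
  have hl' : (p : ℤ) < (l : ℤ) := by exact_mod_cast hl
  have hlR : (0 : ℝ) < (l : ℝ) := by
    have : 0 < l := by omega
    exact_mod_cast this
  have hΔ : (0 : ℝ) < 1 / (l : ℝ) := by positivity
  have hknotl : knot (1 / (l : ℝ)) (l : ℤ) = 1 := by
    unfold knot; field_simp; simp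
  have hknotp : knot (1 / (l : ℝ)) (p : ℤ) = (p : ℝ) * (1 / (l : ℝ)) := by
    unfold knot; push_cast; ring
  have hknotlp : knot (1 / (l : ℝ)) ((l : ℤ) - (p : ℤ)) = 1 - (p : ℝ) * (1 / (l : ℝ)) := by
    unfold knot
    push_cast
    field_simp
  rcases eq_or_lt_of_le hz1 with hz | hz
  · -- z = 1
    subst hz
    obtain ⟨q, rfl⟩ : ∃ q, p = q + 1 := ⟨p - 1, by omega⟩
    have hS0 : (∑ n ∈ Finset.Icc (0 : ℤ) ((l : ℤ) - ((q + 1 : ℕ) : ℤ) - 1),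
        bspline (1 / (l : ℝ)) (q + 1) n (1 : ℝ)) = 0 := by
      apply Finset.sum_eq_zero
      intro n hn
      simp only [Finset.mem_Icc] at hn
      apply bspline_zero_of_ge hΔ
      calc knot (1 / (l : ℝ)) (n + ((q + 1 : ℕ) : ℤ) + 1)
          ≤ knot (1 / (l : ℝ)) (l : ℤ) := knot_mono hΔ (by omega)
        _ = 1 := hknotl
    have hLz : bsplineL l (q + 1) (1 : ℝ) = 0 := by
      unfold bsplineL
      rw [if_neg]
      rintro ⟨_, h2⟩
      have : ((q + 1 : ℕ) : ℝ) * (1 / (l : ℝ)) < 1 := by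
        rw [mul_one_div, div_lt_one hlR]
        exact_mod_cast hl
      linarith
    rw [hS0, hLz, zero_add, zero_add]
    unfold bsplineR
    rw [if_pos]
    · have hsub : Finset.Icc ((l : ℤ) - ((q + 1 : ℕ) : ℤ)) ((l : ℤ) - 1)
          ⊆ Finset.Icc ((l : ℤ) - ((q + 1 : ℕ) : ℤ)) (l : ℤ) := by
        intro x hx; simp only [Finset.mem_Icc] at *; omega
      rw [Finset.sum_subset hsub]
      · have hk2 : (1 : ℝ) < knot (1 / (l : ℝ)) ((l : ℤ) + 1) := by
          unfold knot
          rw [mul_one_div, lt_div_iff₀ hlR]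
          push_cast
          linarith
        exact bspline_partition hΔ (1 : ℝ) (q + 1) (l : ℤ)
          ((l : ℤ) - ((q + 1 : ℕ) : ℤ)) (l : ℤ)
          (le_of_eq hknotl) hk2 (by omega) le_rfl
      · intro x hx hx'
        simp only [Finset.mem_Icc] at hx hx'
        have hxl : x = (l : ℤ) := by omega
        subst hxl
        have h0 := bspline_at_knot hΔ q (l : ℤ)
        rw [hknotl] at h0
        exact h0
    · have hnn : (0 : ℝ) ≤ ((q + 1 : ℕ) : ℝ) * (1 / (l : ℝ)) := by positivity
      exact ⟨by linarith, le_refl _⟩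
  · -- z < 1
    set m : ℤ := ⌊z * (l : ℝ)⌋ with hm
    have hm0 : 0 ≤ m := Int.floor_nonneg.mpr (by positivity)
    have hmlt : m < (l : ℤ) := by
      apply Int.floor_lt.mpr
      push_cast
      nlinarith
    have hk1 : knot (1 / (l : ℝ)) m ≤ z := by
      unfold knot
      rw [mul_one_div, div_le_iff₀ hlR]
      exact Int.floor_le _
    have hk2 : z < knot (1 / (l : ℝ)) (m + 1) := by
      unfold knot
      rw [mul_one_div, lt_div_iff₀ hlR]
      push_cast
      exact Int.lt_floor_add_one _
    have hL : bsplineL l p z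
        = ∑ n ∈ Finset.Icc (-(p : ℤ)) (-1 : ℤ), bspline (1 / (l : ℝ)) p n z := by
      unfold bsplineL
      split_ifs with h
      · rfl
      · symm
        apply Finset.sum_eq_zero
        intro n hn
        simp only [Finset.mem_Icc] at hn
        have hzp : (p : ℝ) * (1 / (l : ℝ)) ≤ z := by
          by_contra hc
          exact h ⟨hz0, lt_of_not_ge hc⟩
        apply bspline_zero_of_ge hΔ
        exact le_trans (le_trans (knot_mono hΔ (b := (p : ℤ)) (by omega))
          (le_of_eq hknotp)) hzp
    have hR : bsplineR l p z
        = ∑ n ∈ Finset.Icc ((l : ℤ) - (p : ℤ)) ((l : ℤ) - 1),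
            bspline (1 / (l : ℝ)) p n z := by
      unfold bsplineR
      split_ifs with h
      · rfl
      · symm
        apply Finset.sum_eq_zero
        intro n hn
        simp only [Finset.mem_Icc] at hn
        have hzp : z < 1 - (p : ℝ) * (1 / (l : ℝ)) := by
          by_contra hc
          exact h ⟨le_of_not_gt hc, hz1⟩
        apply bspline_zero_of_lt hΔ
        exact lt_of_lt_of_le (hknotlp ▸ hzp) (knot_mono hΔ (by omega))
    rw [hL, hR]
    have key : ∑ n ∈ Finset.Icc (-(p : ℤ)) ((l : ℤ) - 1), bspline (1 / (l : ℝ)) p n z = 1 :=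
      bspline_partition hΔ z p m (-(p : ℤ)) ((l : ℤ) - 1) hk1 hk2 (by omega) (by omega)
    have hunion : Finset.Icc (-(p : ℤ)) ((l : ℤ) - 1)
        = (Finset.Icc (-(p : ℤ)) (-1 : ℤ) ∪ Finset.Icc (0 : ℤ) ((l : ℤ) - (p : ℤ) - 1))
          ∪ Finset.Icc ((l : ℤ) - (p : ℤ)) ((l : ℤ) - 1) := by
      ext x
      simp only [Finset.mem_Icc, Finset.mem_union]
      omega
    have d1 : Disjoint (Finset.Icc (-(p : ℤ)) (-1 : ℤ))
        (Finset.Icc (0 : ℤ) ((l : ℤ) - (p : ℤ) - 1)) := by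
      rw [Finset.disjoint_left]
      intro x hx hx'
      simp only [Finset.mem_Icc] at hx hx'
      omega
    have d2 : Disjoint
        (Finset.Icc (-(p : ℤ)) (-1 : ℤ) ∪ Finset.Icc (0 : ℤ) ((l : ℤ) - (p : ℤ) - 1))
        (Finset.Icc ((l : ℤ) - (p : ℤ)) ((l : ℤ) - 1)) := by
      rw [Finset.disjoint_left]
      intro x hx hx'
      simp only [Finset.mem_union, Finset.mem_Icc] at hx hx'
      omega
    rw [hunion, Finset.sum_union d2, Finset.sum_union d1] at key
    linarith
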